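/- Suppose f : E → ℝ is (L₀,L₁)-smooth with respect to ‖·‖. Consider the GGNC iterates x^{k+1} = x^k − γη_k v^k with v^k = −lmo(d^k), η_k = min{ρ, ⟨d^k, v^k⟩}, where d^k = α_k·g_k + (1−α_k)·d^{k−1}, d⁰ = 0, g_k is a stochastic gradient at x^k that is conditionally unbiased with conditional variance (in the inner-product norm ‖·‖₂) at most σ², and α_k ∈ (0,1]. Let λ^k := d^k − ∇f(x^k) and ζ_* := sup_{x≠0} ‖x‖₂/‖x‖_*. Then for all k, E[‖λ^k‖₂²] ≤ (1 − α_k/2)·E[‖λ^{k−1}‖₂²] + α_k²σ² + (4γ²ζ_*²ρ²/α_k)·(L₀² + L₁²·E[‖∇f(x^k)‖_*²]). -/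

import Mathlib

open MeasureTheory
open scoped RealInnerProductSpace
open Filter

private lemma aux_young (a b c : ℝ) (h1 : 0 < a) (h2 : a ≤ 1) (hb : 0 ≤ b) (hc : 0 ≤ c) :
    (1 - a) ^ 2 * (b + c) ^ 2 ≤ (1 - a / 2) * b ^ 2 + 2 / a * c ^ 2 := by
  have h3 : (1 - a) ^ 2 * (b + c) ^ 2 - (1 - a / 2) * b ^ 2 ≤ 2 / a * c ^ 2 := by
    rw [div_mul_eq_mul_div, le_div_iff₀ h1]
    nlinarith [sq_nonneg (a * b - 2 * c), sq_nonneg (a * (b + c)), mul_nonneg hb hc,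
      sq_nonneg (b + c), sq_nonneg c, sq_nonneg b, sq_nonneg (b - c), mul_pos h1 h1,
      mul_nonneg (mul_nonneg h1.le hb) hc, sq_nonneg (a * b - c), sq_nonneg (a * c),
      mul_nonneg (mul_nonneg (mul_nonneg h1.le h1.le) hb) hc]
  linarith

private lemma step_bound {E : Type*} [NormedAddCommGroup E] [InnerProductSpace ℝ E]
    (Nm : E → ℝ) (hNm0 : Nm 0 = 0) (hNmpos : ∀ z : E, z ≠ 0 → 0 < Nm z)
    (hNmsmul : ∀ (a : ℝ) (z : E), Nm (a • z) = |a| * Nm z)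
    (Dstar : E → ℝ)
    (hDstar : ∀ d : E, IsLUB ((fun z => ⟪d, z⟫) '' {z : E | Nm z ≤ 1}) (Dstar d))
    (lmo : E → E)
    (hlmo : ∀ d : E, Nm (lmo d) ≤ 1 ∧ ∀ z : E, Nm z ≤ 1 → ⟪d, lmo d⟫ ≤ ⟪d, z⟫)
    (f' : E → E) (L0 L1 : ℝ) (hL0 : 0 ≤ L0) (hL1 : 0 ≤ L1)
    (hsmooth : ∀ z w : E, L1 * Nm (z - w) ≤ 1 →
      Dstar (f' z - f' w) ≤ (L0 + L1 * Dstar (f' z)) * Nm (z - w))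
    (γ ρ : ℝ) (hγ : 0 < γ) (hρ : 0 < ρ) (hγρ : L1 * (γ * ρ) ≤ 1)
    (ζs : ℝ) (hζs : ∀ z : E, ‖z‖ ≤ ζs * Dstar z)
    (xp dd : E) :
    ‖f' xp - f' (xp - (γ * min ρ ⟪dd, -lmo dd⟫) • (-lmo dd))‖ ^ 2
      ≤ 2 * γ ^ 2 * ζs ^ 2 * ρ ^ 2 *
          (L0 ^ 2 + L1 ^ 2 *
            (Dstar (f' (xp - (γ * min ρ ⟪dd, -lmo dd⟫) • (-lmo dd)))) ^ 2) := by
  have hNmnn : ∀ z : E, 0 ≤ Nm z := by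
    intro z
    by_cases hz : z = 0
    · simp [hz, hNm0]
    · exact (hNmpos z hz).le
  have hDnn : ∀ u : E, 0 ≤ Dstar u := by
    intro u
    have h0 : (0 : ℝ) ∈ (fun z => ⟪u, z⟫) '' {z : E | Nm z ≤ 1} :=
      ⟨0, by simp [hNm0], by simp⟩
    exact (hDstar u).1 h0
  set η := min ρ ⟪dd, -lmo dd⟫ with hη
  have hinner0 : 0 ≤ ⟪dd, -lmo dd⟫ := by
    have h := (hlmo dd).2 0 (by simp [hNm0])
    rw [inner_zero_right] at h
    rw [inner_neg_right]
    linarith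
  have hη0 : 0 ≤ η := le_min hρ.le hinner0
  have hηρ : η ≤ ρ := min_le_left _ _
  set xc := xp - (γ * η) • (-lmo dd) with hxc
  have hdiff : xc - xp = (γ * η) • lmo dd := by
    rw [hxc, smul_neg]
    abel
  have hNmstep : Nm (xc - xp) ≤ γ * ρ := by
    rw [hdiff, hNmsmul, abs_of_nonneg (mul_nonneg hγ.le hη0)]
    calc γ * η * Nm (lmo dd) ≤ γ * η * 1 :=
          mul_le_mul_of_nonneg_left (hlmo dd).1 (mul_nonneg hγ.le hη0)
      _ = γ * η := mul_one _
      _ ≤ γ * ρ := mul_le_mul_of_nonneg_left hηρ hγ.le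
  have hsm := hsmooth xc xp (le_trans (mul_le_mul_of_nonneg_left hNmstep hL1) hγρ)
  have hA : 0 ≤ L0 + L1 * Dstar (f' xc) := add_nonneg hL0 (mul_nonneg hL1 (hDnn _))
  have hDle : Dstar (f' xc - f' xp) ≤ (L0 + L1 * Dstar (f' xc)) * (γ * ρ) :=
    hsm.trans (mul_le_mul_of_nonneg_left hNmstep hA)
  have hnorm : ‖f' xp - f' xc‖ ≤ ζs * Dstar (f' xc - f' xp) := by
    rw [norm_sub_rev]
    exact hζs _
  by_cases hζ : 0 ≤ ζs
  · have h1 : ‖f' xp - f' xc‖ ≤ ζs * ((L0 + L1 * Dstar (f' xc)) * (γ * ρ)) :=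
      hnorm.trans (mul_le_mul_of_nonneg_left hDle hζ)
    have h2 : ‖f' xp - f' xc‖ ^ 2 ≤ (ζs * ((L0 + L1 * Dstar (f' xc)) * (γ * ρ))) ^ 2 :=
      pow_le_pow_left₀ (norm_nonneg _) h1 2
    nlinarith [sq_nonneg (ζs * γ * ρ * (L0 - L1 * Dstar (f' xc)))]
  · push_neg at hζ
    have h0 : ‖f' xp - f' xc‖ ≤ 0 :=
      hnorm.trans (mul_nonpos_of_nonpos_of_nonneg hζ.le (hDnn _))
    have hz : ‖f' xp - f' xc‖ = 0 := le_antisymm h0 (norm_nonneg _)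
    rw [hz]
    have hD := hDnn (f' xc)
    have h00 : ((0:ℝ)) ^ 2 = 0 := by norm_num
    rw [h00]
    positivity

private lemma cross_zero {E : Type*} [NormedAddCommGroup E] [InnerProductSpace ℝ E]
    [FiniteDimensional ℝ E]
    {Ω : Type*} {m mΩ : MeasurableSpace Ω} (hm : m ≤ mΩ) (μ : Measure Ω)
    [IsProbabilityMeasure μ]
    (e c : Ω → E) (he : AEStronglyMeasurable e μ) (hc : StronglyMeasurable[m] c)
    (he2 : Integrable (fun ω => ‖e ω‖ ^ 2) μ) (hc2 : Integrable (fun ω => ‖c ω‖ ^ 2) μ)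
    (heI : Integrable e μ) (hcond : μ[e|m] =ᵐ[μ] 0) :
    ∫ ω, ⟪e ω, c ω⟫ ∂μ = 0 := by
  have hcΩ : AEStronglyMeasurable c μ := (hc.mono hm).aestronglyMeasurable
  set b := stdOrthonormalBasis ℝ E with hb
  have hrepr : ∀ ω, ⟪e ω, c ω⟫ = ∑ i, ⟪b i, c ω⟫ * ⟪b i, e ω⟫ := by
    intro ω
    rw [← b.sum_inner_mul_inner (e ω) (c ω)]
    exact Finset.sum_congr rfl fun i _ => by rw [real_inner_comm (e ω) (b i)]; ring
  have hbn : ∀ i, ‖b i‖ = 1 := fun i => b.orthonormal.1 i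
  have hint : ∀ i, Integrable (fun ω => ⟪b i, c ω⟫ * ⟪b i, e ω⟫) μ := by
    intro i
    refine Integrable.mono' ((he2.add hc2).const_mul (1 / 2))
      ((aestronglyMeasurable_const.inner hcΩ).mul (aestronglyMeasurable_const.inner he))
      (Eventually.of_forall fun ω => ?_)
    have h1 := abs_real_inner_le_norm (b i) (e ω)
    have h2 := abs_real_inner_le_norm (b i) (c ω)
    rw [hbn i, one_mul] at h1 h2
    have h3 : ‖⟪b i, c ω⟫ * ⟪b i, e ω⟫‖ = |⟪b i, c ω⟫| * |⟪b i, e ω⟫| := by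
      rw [Real.norm_eq_abs, abs_mul]
    rw [h3]
    simp only [Pi.add_apply]
    nlinarith [mul_le_mul h2 h1 (abs_nonneg _) (norm_nonneg _), norm_nonneg (e ω),
      norm_nonneg (c ω), sq_nonneg (‖e ω‖ - ‖c ω‖)]
  have hmain : ∀ i, ∫ ω, ⟪b i, c ω⟫ * ⟪b i, e ω⟫ ∂μ = 0 := by
    intro i
    have hφI : Integrable (fun ω => ⟪b i, e ω⟫) μ := by
      refine Integrable.mono' heI.norm (aestronglyMeasurable_const.inner he)
        (Eventually.of_forall fun ω => ?_)
      have h1 := abs_real_inner_le_norm (b i) (e ω)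
      rw [hbn i, one_mul] at h1
      simpa [Real.norm_eq_abs] using h1
    have hφcond : μ[fun ω => ⟪b i, e ω⟫|m] =ᵐ[μ] 0 := by
      have h := ae_eq_condExp_of_forall_setIntegral_eq (μ := μ)
        (f := fun ω => ⟪b i, e ω⟫) (g := fun _ => (0 : ℝ)) hm hφI
        (fun s _ _ => (integrable_zero _ _ _).integrableOn)
        (fun s hs hμs => ?_)
        (StronglyMeasurable.aestronglyMeasurable stronglyMeasurable_const)
      · exact h.symm
      · have hse : ∫ ω in s, e ω ∂μ = 0 := by
          rw [← setIntegral_condExp hm heI hs, integral_congr_ae (ae_restrict_of_ae hcond)]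
          simp
        have hcc := ContinuousLinearMap.integral_comp_comm (innerSL ℝ (b i))
          (heI.restrict (s := s))
        simp only [innerSL_apply_apply] at hcc
        rw [hcc, hse, inner_zero_right, integral_zero]
    have hψm : StronglyMeasurable[m] (fun ω => ⟪b i, c ω⟫) :=
      (continuous_const.inner continuous_id).comp_stronglyMeasurable hc
    have hpull : μ[(fun ω => ⟪b i, c ω⟫) * (fun ω => ⟪b i, e ω⟫)|m]
        =ᵐ[μ] (fun ω => ⟪b i, c ω⟫) * μ[fun ω => ⟪b i, e ω⟫|m] :=
      condExp_mul_of_stronglyMeasurable_left hψm (hint i) hφI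
    have hzero : μ[(fun ω => ⟪b i, c ω⟫) * (fun ω => ⟪b i, e ω⟫)|m] =ᵐ[μ] 0 := by
      refine hpull.trans ?_
      filter_upwards [hφcond] with ω hω
      simp [hω]
    calc ∫ ω, ⟪b i, c ω⟫ * ⟪b i, e ω⟫ ∂μ
        = ∫ ω, (μ[(fun ω => ⟪b i, c ω⟫) * (fun ω => ⟪b i, e ω⟫)|m]) ω ∂μ :=
          (integral_condExp hm).symm
      _ = ∫ ω, (0 : Ω → ℝ) ω ∂μ := integral_congr_ae hzero
      _ = 0 := by simp
  calc ∫ ω, ⟪e ω, c ω⟫ ∂μ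
      = ∫ ω, ∑ i, ⟪b i, c ω⟫ * ⟪b i, e ω⟫ ∂μ := by
        exact integral_congr_ae (Eventually.of_forall fun ω => hrepr ω)
    _ = ∑ i, ∫ ω, ⟪b i, c ω⟫ * ⟪b i, e ω⟫ ∂μ :=
        integral_finset_sum _ fun i _ => hint i
    _ = 0 := Finset.sum_eq_zero fun i _ => hmain i

set_option maxHeartbeats 1000000 in
/-- Recursive control of the momentum estimator error for GGNC under
`(L₀,L₁)`-smoothness: with `λ^k = d^k − ∇f(x^k)` and `ζ_*` the norm-equivalence
constant `‖·‖₂ ≤ ζ_*‖·‖_*`,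
`E‖λ^k‖₂² ≤ (1 − α_k/2)E‖λ^{k−1}‖₂² + α_k²σ² + (4γ²ζ_*²ρ²/α_k)(L₀² + L₁²E‖∇f(x^k)‖_*²)`. -/
theorem GGNC_error_recursion
    {E : Type*} [NormedAddCommGroup E] [InnerProductSpace ℝ E] [FiniteDimensional ℝ E]
    {Ω : Type*} {mΩ : MeasurableSpace Ω} (μ : Measure Ω) [IsProbabilityMeasure μ]
    (ℱ : Filtration ℕ mΩ)
    -- the (possibly non-Euclidean) norm `‖·‖` on `E` (`‖·‖₂` is the inner-product norm)
    (Nm : E → ℝ)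
    (hNm0 : Nm 0 = 0)
    (hNmpos : ∀ z : E, z ≠ 0 → 0 < Nm z)
    (hNmsmul : ∀ (a : ℝ) (z : E), Nm (a • z) = |a| * Nm z)
    (hNmadd : ∀ z w : E, Nm (z + w) ≤ Nm z + Nm w)
    -- the dual norm `‖d‖_* = sup {⟨d,x⟩ : ‖x‖ ≤ 1}`
    (Dstar : E → ℝ)
    (hDstar : ∀ d : E, IsLUB ((fun z => ⟪d, z⟫) '' {z : E | Nm z ≤ 1}) (Dstar d))
    -- the linear minimization oracle `lmo(d) ∈ argmin {⟨d,x⟩ : ‖x‖ ≤ 1}`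
    (lmo : E → E)
    (hlmo : ∀ d : E, Nm (lmo d) ≤ 1 ∧ ∀ z : E, Nm z ≤ 1 → ⟪d, lmo d⟫ ≤ ⟪d, z⟫)
    -- `f` differentiable with gradient `f'`
    (f : E → ℝ) (f' : E → E)
    (hdiff : ∀ z, HasGradientAt f (f' z) z)
    -- `(L₀,L₁)`-smoothness (the condition `‖x−y‖ ≤ 1/L₁` is encoded as `L₁‖x−y‖ ≤ 1`)
    (L0 L1 : ℝ) (hL0 : 0 ≤ L0) (hL1 : 0 ≤ L1)
    (hsmooth : ∀ z w : E, L1 * Nm (z - w) ≤ 1 →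
      Dstar (f' z - f' w) ≤ (L0 + L1 * Dstar (f' z)) * Nm (z - w))
    -- parameters; the step satisfies `γη_k ≤ γρ ≤ 1/L₁`
    (γ ρ σ : ℝ) (hγ : 0 < γ) (hρ : 0 < ρ) (hσ : 0 ≤ σ) (hγρ : L1 * (γ * ρ) ≤ 1)
    (α : ℕ → ℝ) (hα : ∀ k, 1 ≤ k → 0 < α k ∧ α k ≤ 1)
    -- the iterates, momentum estimator and stochastic gradients
    (x d g : ℕ → Ω → E)
    (hd0 : ∀ ω, d 0 ω = 0)
    (hd : ∀ k, 1 ≤ k → ∀ ω, d k ω = α k • g k ω + (1 - α k) • d (k - 1) ω)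
    (hx : ∀ (k : ℕ) (ω : Ω), x (k + 1) ω =
      x k ω - (γ * min ρ ⟪d k ω, -lmo (d k ω)⟫) • (-lmo (d k ω)))
    -- the filtration is generated by the iterates
    (hx_adapted : ∀ k, StronglyMeasurable[ℱ k] (x k))
    (hd_adapted : ∀ k, StronglyMeasurable[ℱ (k + 1)] (d k))
    -- the stochastic gradient is conditionally unbiased with variance at most `σ²`
    (hg_unbiased : ∀ k, 1 ≤ k → μ[g k | ℱ k] =ᵐ[μ] fun ω => f' (x k ω))
    (hg_var : ∀ k, 1 ≤ k →
      ∀ᵐ ω ∂μ, (μ[fun ω' => ‖g k ω' - f' (x k ω')‖ ^ 2 | ℱ k]) ω ≤ σ ^ 2)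
    -- integrability of the quantities appearing in the statement
    (herrint : ∀ k, Integrable (fun ω => ‖d k ω - f' (x k ω)‖ ^ 2) μ)
    (hgradint : ∀ k, Integrable (fun ω => (Dstar (f' (x k ω))) ^ 2) μ)
    -- the norm-equivalence constant `ζ_* = sup ‖·‖₂/‖·‖_*`
    (ζs : ℝ) (hζs : ∀ z : E, ‖z‖ ≤ ζs * Dstar z) :
    ∀ k, 1 ≤ k →
      ∫ ω, ‖d k ω - f' (x k ω)‖ ^ 2 ∂μ
        ≤ (1 - α k / 2) * ∫ ω, ‖d (k - 1) ω - f' (x (k - 1) ω)‖ ^ 2 ∂μ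
          + (α k) ^ 2 * σ ^ 2
          + 4 * γ ^ 2 * ζs ^ 2 * ρ ^ 2 / α k *
              (L0 ^ 2 + L1 ^ 2 * ∫ ω, (Dstar (f' (x k ω))) ^ 2 ∂μ) := by
  borelize E
  borelize (E →L[ℝ] ℝ)
  intro k hk
  obtain ⟨m, rfl⟩ : ∃ m, k = m + 1 := ⟨k - 1, (Nat.succ_pred_eq_of_pos hk).symm⟩
  simp only [Nat.add_sub_cancel]
  obtain ⟨hα1, hα2⟩ := hα (m + 1) (Nat.le_add_left 1 m)
  have hf'meas : Measurable f' := by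
    have h1 : f' = fun z => gradient f z := funext fun z => ((hdiff z).gradient).symm
    rw [h1]
    exact ((InnerProductSpace.toDual ℝ E).symm.continuous.measurable).comp
      (measurable_fderiv ℝ f)
  have hle : ℱ (m + 1) ≤ mΩ := ℱ.le (m + 1)
  have hxK : StronglyMeasurable[ℱ (m + 1)] (x (m + 1)) := hx_adapted (m + 1)
  have hf'xK : StronglyMeasurable[ℱ (m + 1)] fun ω => f' (x (m + 1) ω) :=
    (hf'meas.comp hxK.measurable).stronglyMeasurable
  have hdm : StronglyMeasurable[ℱ (m + 1)] (d m) := hd_adapted m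
  set c : Ω → E := fun ω => (1 - α (m + 1)) • (d m ω - f' (x (m + 1) ω)) with hc_def
  set e : Ω → E := fun ω => g (m + 1) ω - f' (x (m + 1) ω) with he_def
  have hid : ∀ ω, d (m + 1) ω - f' (x (m + 1) ω) = α (m + 1) • e ω + c ω := by
    intro ω
    have h := hd (m + 1) (Nat.le_add_left 1 m) ω
    simp only [Nat.add_sub_cancel] at h
    simp only [he_def, hc_def]
    rw [h]
    simp only [smul_sub, sub_smul, one_smul]
    abel
  have hceq : ∀ ω, e ω = (α (m + 1))⁻¹ • ((d (m + 1) ω - f' (x (m + 1) ω)) - c ω) := by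
    intro ω
    have h : (d (m + 1) ω - f' (x (m + 1) ω)) - c ω = α (m + 1) • e ω := by
      rw [hid ω]; abel
    rw [h, inv_smul_smul₀ hα1.ne']
  have hc_sm : StronglyMeasurable[ℱ (m + 1)] c := (hdm.sub hf'xK).const_smul _
  have he_sm : StronglyMeasurable[ℱ (m + 1 + 1)] e := by
    have h1 : StronglyMeasurable[ℱ (m + 1 + 1)]
        fun ω => (α (m + 1))⁻¹ • ((d (m + 1) ω - f' (x (m + 1) ω)) - c ω) :=
      (((hd_adapted (m + 1)).sub (hf'xK.mono (ℱ.mono (Nat.le_succ _)))).sub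
        (hc_sm.mono (ℱ.mono (Nat.le_succ _)))).const_smul _
    exact (funext hceq : e = _) ▸ h1
  have he_aesm : AEStronglyMeasurable e μ := (he_sm.mono (ℱ.le _)).aestronglyMeasurable
  have hintD : Integrable (fun ω => (Dstar (f' (x (m + 1) ω))) ^ 2) μ := hgradint (m + 1)
  have hintf'sq : Integrable (fun ω => ‖f' (x (m + 1) ω)‖ ^ 2) μ := by
    refine Integrable.mono' (hintD.const_mul (ζs ^ 2))
      (((hf'meas.comp (hxK.mono hle).measurable).norm.pow_const 2).aestronglyMeasurable)
      (Eventually.of_forall fun ω => ?_)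
    show ‖‖f' (x (m + 1) ω)‖ ^ 2‖ ≤ ζs ^ 2 * (Dstar (f' (x (m + 1) ω))) ^ 2
    have h2 : ‖f' (x (m + 1) ω)‖ ^ 2 ≤ (ζs * Dstar (f' (x (m + 1) ω))) ^ 2 :=
      pow_le_pow_left₀ (norm_nonneg _) (hζs _) 2
    rw [Real.norm_eq_abs, abs_of_nonneg (sq_nonneg _)]
    rw [mul_pow] at h2
    exact h2
  have hsb : ∀ ω, ‖f' (x m ω) - f' (x (m + 1) ω)‖ ^ 2
      ≤ 2 * γ ^ 2 * ζs ^ 2 * ρ ^ 2 * (L0 ^ 2 + L1 ^ 2 * (Dstar (f' (x (m + 1) ω))) ^ 2) := by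
    intro ω
    have hstep := step_bound Nm hNm0 hNmpos hNmsmul Dstar hDstar lmo hlmo f' L0 L1 hL0 hL1
      hsmooth γ ρ hγ hρ hγρ ζs hζs (x m ω) (d m ω)
    rw [← hx m ω] at hstep
    exact hstep
  have hB2 : Integrable
      (fun ω => 2 * γ ^ 2 * ζs ^ 2 * ρ ^ 2 *
        (L0 ^ 2 + L1 ^ 2 * (Dstar (f' (x (m + 1) ω))) ^ 2)) μ :=
    ((integrable_const (L0 ^ 2)).add (hintD.const_mul (L1 ^ 2))).const_mul _
  have hints_sq : Integrable (fun ω => ‖f' (x m ω) - f' (x (m + 1) ω)‖ ^ 2) μ := by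
    refine Integrable.mono' hB2
      ((((hf'meas.comp ((hx_adapted m).mono (ℱ.le m)).measurable).sub
        (hf'meas.comp (hxK.mono hle).measurable)).norm.pow_const 2).aestronglyMeasurable)
      (Eventually.of_forall fun ω => ?_)
    show ‖‖f' (x m ω) - f' (x (m + 1) ω)‖ ^ 2‖ ≤ _
    rw [Real.norm_eq_abs, abs_of_nonneg (sq_nonneg _)]
    exact hsb ω
  have hcPS : ∀ ω, c ω = (1 - α (m + 1)) •
      ((d m ω - f' (x m ω)) + (f' (x m ω) - f' (x (m + 1) ω))) := by
    intro ω
    simp only [hc_def]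
    congr 1
    abel
  have hc_sq_bound : ∀ ω, ‖c ω‖ ^ 2
      ≤ 2 * ‖d m ω - f' (x m ω)‖ ^ 2 + 2 * ‖f' (x m ω) - f' (x (m + 1) ω)‖ ^ 2 := by
    intro ω
    have h1 : ‖c ω‖ ≤ ‖d m ω - f' (x m ω)‖ + ‖f' (x m ω) - f' (x (m + 1) ω)‖ := by
      rw [hcPS ω, norm_smul, Real.norm_eq_abs]
      have hab : |1 - α (m + 1)| ≤ 1 := by
        rw [abs_of_nonneg (by linarith)]; linarith
      calc |1 - α (m + 1)| * ‖(d m ω - f' (x m ω)) + (f' (x m ω) - f' (x (m + 1) ω))‖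
          ≤ 1 * ‖(d m ω - f' (x m ω)) + (f' (x m ω) - f' (x (m + 1) ω))‖ :=
            mul_le_mul_of_nonneg_right hab (norm_nonneg _)
        _ = ‖(d m ω - f' (x m ω)) + (f' (x m ω) - f' (x (m + 1) ω))‖ := one_mul _
        _ ≤ _ := norm_add_le _ _
    nlinarith [norm_nonneg (c ω), norm_nonneg (d m ω - f' (x m ω)),
      norm_nonneg (f' (x m ω) - f' (x (m + 1) ω)),
      sq_nonneg (‖d m ω - f' (x m ω)‖ - ‖f' (x m ω) - f' (x (m + 1) ω)‖)]
  have hintc_sq : Integrable (fun ω => ‖c ω‖ ^ 2) μ := by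
    refine Integrable.mono' (((herrint m).const_mul 2).add (hints_sq.const_mul 2))
      ((((hc_sm.mono hle).measurable).norm.pow_const 2).aestronglyMeasurable)
      (Eventually.of_forall fun ω => ?_)
    show ‖‖c ω‖ ^ 2‖ ≤ 2 * ‖d m ω - f' (x m ω)‖ ^ 2 + 2 * ‖f' (x m ω) - f' (x (m + 1) ω)‖ ^ 2
    rw [Real.norm_eq_abs, abs_of_nonneg (sq_nonneg _)]
    exact hc_sq_bound ω
  have he_sq_bound : ∀ ω, ‖e ω‖ ^ 2 ≤ ((α (m + 1))⁻¹) ^ 2 *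
      (2 * ‖d (m + 1) ω - f' (x (m + 1) ω)‖ ^ 2 + 2 * ‖c ω‖ ^ 2) := by
    intro ω
    rw [hceq ω, norm_smul, Real.norm_eq_abs, abs_of_nonneg (inv_nonneg.2 hα1.le), mul_pow]
    refine mul_le_mul_of_nonneg_left ?_ (by positivity)
    nlinarith [pow_le_pow_left₀ (norm_nonneg (d (m + 1) ω - f' (x (m + 1) ω) - c ω))
        (norm_sub_le (d (m + 1) ω - f' (x (m + 1) ω)) (c ω)) 2,
      sq_nonneg (‖d (m + 1) ω - f' (x (m + 1) ω)‖ - ‖c ω‖)]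
  have hinte_sq : Integrable (fun ω => ‖e ω‖ ^ 2) μ := by
    refine Integrable.mono'
      ((((herrint (m + 1)).const_mul 2).add (hintc_sq.const_mul 2)).const_mul (((α (m + 1))⁻¹) ^ 2))
      ((((he_sm.mono (ℱ.le _)).measurable).norm.pow_const 2).aestronglyMeasurable)
      (Eventually.of_forall fun ω => ?_)
    show ‖‖e ω‖ ^ 2‖ ≤ ((α (m + 1))⁻¹) ^ 2 *
      (2 * ‖d (m + 1) ω - f' (x (m + 1) ω)‖ ^ 2 + 2 * ‖c ω‖ ^ 2)
    rw [Real.norm_eq_abs, abs_of_nonneg (sq_nonneg _)]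
    exact he_sq_bound ω
  have hinte_inner : Integrable (fun ω => ⟪e ω, c ω⟫) μ := by
    refine Integrable.mono' ((hinte_sq.add hintc_sq).const_mul (1 / 2))
      (he_aesm.inner (hc_sm.mono hle).aestronglyMeasurable)
      (Eventually.of_forall fun ω => ?_)
    show ‖⟪e ω, c ω⟫‖ ≤ 1 / 2 * (‖e ω‖ ^ 2 + ‖c ω‖ ^ 2)
    rw [Real.norm_eq_abs]
    nlinarith [abs_real_inner_le_norm (e ω) (c ω), norm_nonneg (e ω), norm_nonneg (c ω),
      sq_nonneg (‖e ω‖ - ‖c ω‖), abs_nonneg ⟪e ω, c ω⟫, abs_le.1 (le_refl |⟪e ω, c ω⟫|)]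
  have hinteI : Integrable e μ := by
    refine Integrable.mono' (((integrable_const (1 : ℝ)).add hinte_sq).const_mul (1 / 2)) he_aesm
      (Eventually.of_forall fun ω => ?_)
    show ‖e ω‖ ≤ 1 / 2 * (1 + ‖e ω‖ ^ 2)
    nlinarith [sq_nonneg (‖e ω‖ - 1), norm_nonneg (e ω)]
  have hintf'I : Integrable (fun ω => f' (x (m + 1) ω)) μ := by
    refine Integrable.mono' (((integrable_const (1 : ℝ)).add hintf'sq).const_mul (1 / 2))
      ((hf'xK.mono hle).aestronglyMeasurable) (Eventually.of_forall fun ω => ?_)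
    show ‖f' (x (m + 1) ω)‖ ≤ 1 / 2 * (1 + ‖f' (x (m + 1) ω)‖ ^ 2)
    nlinarith [sq_nonneg (‖f' (x (m + 1) ω)‖ - 1), norm_nonneg (f' (x (m + 1) ω))]
  have hintgI : Integrable (g (m + 1)) μ := by
    have hgeq : g (m + 1) = fun ω => e ω + f' (x (m + 1) ω) := by
      funext ω
      simp only [he_def]
      abel
    rw [hgeq]
    exact hinteI.add hintf'I
  have hcond : μ[e|ℱ (m + 1)] =ᵐ[μ] 0 := by
    have h1 : μ[e|ℱ (m + 1)]
        =ᵐ[μ] μ[g (m + 1)|ℱ (m + 1)] - μ[fun ω => f' (x (m + 1) ω)|ℱ (m + 1)] := by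
      have h := condExp_sub (m := ℱ (m + 1)) hintgI hintf'I
      exact h
    have h2 : μ[fun ω => f' (x (m + 1) ω)|ℱ (m + 1)] = fun ω => f' (x (m + 1) ω) :=
      condExp_of_stronglyMeasurable hle hf'xK hintf'I
    refine h1.trans ?_
    rw [h2]
    filter_upwards [hg_unbiased (m + 1) (Nat.le_add_left 1 m)] with ω hω
    simp [hω]
  have hvar : ∫ ω, ‖e ω‖ ^ 2 ∂μ ≤ σ ^ 2 := by
    have h1 : ∫ ω, ‖e ω‖ ^ 2 ∂μ
        = ∫ ω, (μ[fun ω' => ‖g (m + 1) ω' - f' (x (m + 1) ω')‖ ^ 2|ℱ (m + 1)]) ω ∂μ :=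
      (integral_condExp (f := fun ω' => ‖g (m + 1) ω' - f' (x (m + 1) ω')‖ ^ 2) hle).symm
    rw [h1]
    calc ∫ ω, (μ[fun ω' => ‖g (m + 1) ω' - f' (x (m + 1) ω')‖ ^ 2|ℱ (m + 1)]) ω ∂μ
        ≤ ∫ _ω, σ ^ 2 ∂μ := integral_mono_ae integrable_condExp (integrable_const _)
          (hg_var (m + 1) (Nat.le_add_left 1 m))
      _ = σ ^ 2 := by simp
  have hcross : ∫ ω, ⟪e ω, c ω⟫ ∂μ = 0 :=
    cross_zero hle μ e c he_aesm hc_sm hinte_sq hintc_sq hinteI hcond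
  have hsq : ∀ ω, ‖d (m + 1) ω - f' (x (m + 1) ω)‖ ^ 2
      = (α (m + 1)) ^ 2 * ‖e ω‖ ^ 2 + 2 * (α (m + 1) * ⟪e ω, c ω⟫) + ‖c ω‖ ^ 2 := by
    intro ω
    rw [hid ω, norm_add_sq_real, real_inner_smul_left, norm_smul, Real.norm_eq_abs,
      abs_of_pos hα1]
    ring
  have hcb : ∀ ω, ‖c ω‖ ^ 2 ≤ (1 - α (m + 1) / 2) * ‖d m ω - f' (x m ω)‖ ^ 2
      + 2 / α (m + 1) * (2 * γ ^ 2 * ζs ^ 2 * ρ ^ 2 *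
          (L0 ^ 2 + L1 ^ 2 * (Dstar (f' (x (m + 1) ω))) ^ 2)) := by
    intro ω
    have h2 : ‖c ω‖ ^ 2 ≤ (1 - α (m + 1)) ^ 2 *
        (‖d m ω - f' (x m ω)‖ + ‖f' (x m ω) - f' (x (m + 1) ω)‖) ^ 2 := by
      rw [hcPS ω, norm_smul, Real.norm_eq_abs,
        abs_of_nonneg (by linarith : (0 : ℝ) ≤ 1 - α (m + 1)), mul_pow]
      exact mul_le_mul_of_nonneg_left
        (pow_le_pow_left₀ (norm_nonneg _) (norm_add_le _ _) 2) (sq_nonneg _)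
    have h3 := aux_young (α (m + 1)) ‖d m ω - f' (x m ω)‖
      ‖f' (x m ω) - f' (x (m + 1) ω)‖ hα1 hα2 (norm_nonneg _) (norm_nonneg _)
    have h5 : 2 / α (m + 1) * ‖f' (x m ω) - f' (x (m + 1) ω)‖ ^ 2
        ≤ 2 / α (m + 1) * (2 * γ ^ 2 * ζs ^ 2 * ρ ^ 2 *
          (L0 ^ 2 + L1 ^ 2 * (Dstar (f' (x (m + 1) ω))) ^ 2)) :=
      mul_le_mul_of_nonneg_left (hsb ω) (by positivity)
    linarith
  have e1 : ∫ ω, (2 * γ ^ 2 * ζs ^ 2 * ρ ^ 2 *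
      (L0 ^ 2 + L1 ^ 2 * (Dstar (f' (x (m + 1) ω))) ^ 2)) ∂μ
      = 2 * γ ^ 2 * ζs ^ 2 * ρ ^ 2 *
        (L0 ^ 2 + L1 ^ 2 * ∫ ω, (Dstar (f' (x (m + 1) ω))) ^ 2 ∂μ) := by
    rw [integral_const_mul, integral_add (integrable_const _) (hintD.const_mul _),
      integral_const_mul, integral_const]
    rw [probReal_univ, one_smul]
  have hIc : ∫ ω, ‖c ω‖ ^ 2 ∂μ
      ≤ (1 - α (m + 1) / 2) * (∫ ω, ‖d m ω - f' (x m ω)‖ ^ 2 ∂μ)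
        + 2 / α (m + 1) * (2 * γ ^ 2 * ζs ^ 2 * ρ ^ 2 *
          (L0 ^ 2 + L1 ^ 2 * ∫ ω, (Dstar (f' (x (m + 1) ω))) ^ 2 ∂μ)) := by
    have hBint : Integrable (fun ω => (1 - α (m + 1) / 2) * ‖d m ω - f' (x m ω)‖ ^ 2
        + 2 / α (m + 1) * (2 * γ ^ 2 * ζs ^ 2 * ρ ^ 2 *
          (L0 ^ 2 + L1 ^ 2 * (Dstar (f' (x (m + 1) ω))) ^ 2))) μ :=
      ((herrint m).const_mul _).add (hB2.const_mul _)
    have h1 : ∫ ω, ‖c ω‖ ^ 2 ∂μ ≤ ∫ ω, ((1 - α (m + 1) / 2) * ‖d m ω - f' (x m ω)‖ ^ 2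
        + 2 / α (m + 1) * (2 * γ ^ 2 * ζs ^ 2 * ρ ^ 2 *
          (L0 ^ 2 + L1 ^ 2 * (Dstar (f' (x (m + 1) ω))) ^ 2))) ∂μ :=
      integral_mono hintc_sq hBint hcb
    refine h1.trans_eq ?_
    rw [integral_add ((herrint m).const_mul (1 - α (m + 1) / 2))
        (hB2.const_mul (2 / α (m + 1))), integral_const_mul, integral_const_mul, e1]
  have hIeq : ∫ ω, ‖d (m + 1) ω - f' (x (m + 1) ω)‖ ^ 2 ∂μ
      = (α (m + 1)) ^ 2 * ∫ ω, ‖e ω‖ ^ 2 ∂μ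
        + 2 * (α (m + 1) * ∫ ω, ⟪e ω, c ω⟫ ∂μ) + ∫ ω, ‖c ω‖ ^ 2 ∂μ := by
    simp only [hsq]
    have hI2 : Integrable (fun ω => 2 * (α (m + 1) * ⟪e ω, c ω⟫)) μ :=
      (hinte_inner.const_mul (α (m + 1))).const_mul 2
    have hI1 : Integrable (fun ω => (α (m + 1)) ^ 2 * ‖e ω‖ ^ 2
        + 2 * (α (m + 1) * ⟪e ω, c ω⟫)) μ :=
      (hinte_sq.const_mul ((α (m + 1)) ^ 2)).add hI2
    rw [integral_add hI1 hintc_sq,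
      integral_add (hinte_sq.const_mul ((α (m + 1)) ^ 2)) hI2,
      integral_const_mul, integral_const_mul, integral_const_mul]
  have h4 : 2 / α (m + 1) * (2 * γ ^ 2 * ζs ^ 2 * ρ ^ 2 *
      (L0 ^ 2 + L1 ^ 2 * ∫ ω, (Dstar (f' (x (m + 1) ω))) ^ 2 ∂μ))
      = 4 * γ ^ 2 * ζs ^ 2 * ρ ^ 2 / α (m + 1) *
        (L0 ^ 2 + L1 ^ 2 * ∫ ω, (Dstar (f' (x (m + 1) ω))) ^ 2 ∂μ) := by
    field_simp
    ring
  rw [h4] at hIc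
  have h5 : (α (m + 1)) ^ 2 * ∫ ω, ‖e ω‖ ^ 2 ∂μ ≤ (α (m + 1)) ^ 2 * σ ^ 2 :=
    mul_le_mul_of_nonneg_left hvar (sq_nonneg _)
  rw [hIeq, hcross]
  linarith
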